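/- arXiv:1707.04047 — 8 statements merged into one kernel-verified Lean document; each statement's English description precedes it below -/
import Mathlib

section
/- (Lemma 1) If the similarity function g is nonnegative (g u w ≥ 0 for all u, w), then h is a submodular set function: for all finite subsets V₁ ⊆ V₂ of ι and every v ∉ V₂, h(V₁ ∪ {v}) − h(V₁) ≥ h(V₂ ∪ {v}) − h(V₂). -/
open Finset

lemma repSet_insert' {ι : Type*} [Fintype ι] [DecidableEq ι]
    (g : ι → ι → ℝ) (V : Finset ι) (v : ι) (hv : v ∉ V) :
    (∑ x ∈ insert v V, ∑ w ∈ Finset.univ.filter (fun w => w ≠ x), g x w)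
      = (∑ w ∈ Finset.univ.filter (fun w => w ≠ v), g v w)
        + ∑ x ∈ V, ∑ w ∈ Finset.univ.filter (fun w => w ≠ x), g x w :=
  Finset.sum_insert hv

lemma redSet_insert' {ι : Type*} [Fintype ι] [DecidableEq ι]
    (g : ι → ι → ℝ) (V : Finset ι) (v : ι) (hv : v ∉ V) :
    (∑ x ∈ insert v V, ∑ w ∈ (insert v V).filter (fun w => w ≠ x), g x w)
      = (∑ x ∈ V, ∑ w ∈ V.filter (fun w => w ≠ x), g x w)
        + ∑ w ∈ V, (g v w + g w v) := by
  rw [Finset.sum_insert hv]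
  have h1 : (insert v V).filter (fun w => w ≠ v) = V := by
    ext w
    simp only [mem_filter, mem_insert]
    constructor
    · rintro ⟨h | h, hne⟩ <;> [exact absurd h hne; exact h]
    · intro h; exact ⟨Or.inr h, fun e => hv (e ▸ h)⟩
  have h2 : ∀ x ∈ V, (insert v V).filter (fun w => w ≠ x) = insert v (V.filter (fun w => w ≠ x)) := by
    intro x hx
    rw [Finset.filter_insert]
    simp only [if_pos (show v ≠ x from fun e => hv (e ▸ hx))]
  have h3 : ∀ x ∈ V, ∑ w ∈ (insert v V).filter (fun w => w ≠ x), g x w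
      = g x v + ∑ w ∈ V.filter (fun w => w ≠ x), g x w := by
    intro x hx
    rw [h2 x hx]
    exact Finset.sum_insert (by simp; intro h; exact absurd h hv)
  rw [h1, Finset.sum_congr rfl h3, Finset.sum_add_distrib, Finset.sum_add_distrib]
  ring

/-- Representativeness of a view set `V`: total similarity of its members to
all other elements of the ground set. -/
noncomputable def repSet {ι : Type*} [Fintype ι] [DecidableEq ι]
    (g : ι → ι → ℝ) (V : Finset ι) : ℝ :=
  ∑ v ∈ V, ∑ w ∈ Finset.univ.filter (fun w => w ≠ v), g v w

/-- Redundancy of a view set `V`: total similarity among its own members. -/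
noncomputable def redSet {ι : Type*} [Fintype ι] [DecidableEq ι]
    (g : ι → ι → ℝ) (V : Finset ι) : ℝ :=
  ∑ v ∈ V, ∑ w ∈ V.filter (fun w => w ≠ v), g v w

/-- The canonical-view mining objective `h(V) = Rep(V) − Red(V)`. -/
noncomputable def objH {ι : Type*} [Fintype ι] [DecidableEq ι]
    (g : ι → ι → ℝ) (V : Finset ι) : ℝ :=
  repSet g V - redSet g V

theorem objH_submodular {ι : Type*} [Fintype ι] [DecidableEq ι]
    (g : ι → ι → ℝ) (hg : ∀ u w, 0 ≤ g u w)
    (V₁ V₂ : Finset ι) (hsub : V₁ ⊆ V₂) (v : ι) (hv : v ∉ V₂) :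
    objH g (insert v V₂) - objH g V₂ ≤ objH g (insert v V₁) - objH g V₁ := by
  have hv1 : v ∉ V₁ := fun h => hv (hsub h)
  have key : ∀ (V : Finset ι), v ∉ V →
      objH g (insert v V) - objH g V
        = (∑ w ∈ Finset.univ.filter (fun w => w ≠ v), g v w) - ∑ w ∈ V, (g v w + g w v) := by
    intro V hV
    unfold objH repSet redSet
    rw [repSet_insert' g V v hV, redSet_insert' g V v hV]
    ring
  rw [key V₁ hv1, key V₂ hv]
  have : ∑ w ∈ V₁, (g v w + g w v) ≤ ∑ w ∈ V₂, (g v w + g w v) :=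
    Finset.sum_le_sum_of_subset_of_nonneg hsub
      (fun w _ _ => add_nonneg (hg v w) (hg w v))
  linarith
end

section
/- (Lemma 2) Let V₁ ⊆ V₂ be finite subsets of ι. If Σ_{u ∈ V₁} Σ_{w ∈ V₂ \ V₁} g u w ≤ Σ_{u ∈ V₂ \ V₁} Σ_{w ∉ V₂} g u w (the paper's 'small canonical set' condition, automatic in their regime |V₁|, |V₂| ≪ |ι|), then h(V₁) ≤ h(V₂). -/
open Finset

theorem objH_monotone_of_small {ι : Type*} [Fintype ι] [DecidableEq ι]
    (g : ι → ι → ℝ) (V₁ V₂ : Finset ι) (hsub : V₁ ⊆ V₂)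
    (hsmall : ∑ u ∈ V₁, ∑ w ∈ V₂ \ V₁, g u w
        ≤ ∑ u ∈ V₂ \ V₁, ∑ w ∈ V₂ᶜ, g u w) :
    objH g V₁ ≤ objH g V₂ := by
  have key : ∀ V : Finset ι, objH g V = ∑ v ∈ V, ∑ w ∈ Vᶜ, g v w := by
    intro V
    unfold objH repSet redSet
    rw [← Finset.sum_sub_distrib]
    refine Finset.sum_congr rfl fun v hv => ?_
    rw [Finset.filter_ne', Finset.filter_ne',
        Finset.sum_erase_eq_sub (Finset.mem_univ v), Finset.sum_erase_eq_sub hv,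
        Finset.compl_eq_univ_sdiff, Finset.sum_sdiff_eq_sub (Finset.subset_univ V)]
    ring
  have hcompl : V₂ᶜ ⊆ V₁ᶜ := Finset.compl_subset_compl.mpr hsub
  have h1 : objH g V₁ = ∑ v ∈ V₁, ∑ w ∈ V₂ᶜ, g v w + ∑ v ∈ V₁, ∑ w ∈ V₂ \ V₁, g v w := by
    rw [key, ← Finset.sum_add_distrib]
    refine Finset.sum_congr rfl fun v _ => ?_
    rw [← compl_sdiff_compl (x := V₁) (y := V₂), add_comm, Finset.sum_sdiff hcompl]
  have h2 : objH g V₂ = ∑ v ∈ V₁, ∑ w ∈ V₂ᶜ, g v w + ∑ v ∈ V₂ \ V₁, ∑ w ∈ V₂ᶜ, g v w := by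
    rw [key, add_comm, Finset.sum_sdiff hsub]
  rw [h1, h2]
  linarith
end

section
/- (Theorem 1, greedy guarantee) Let α be a finite type, T ≤ card α a natural number, and f : Finset α → ℝ a set function with f(∅) = 0 that is monotone nondecreasing (S ⊆ S' implies f(S) ≤ f(S')) and submodular (f(S ∪ {v}) − f(S) ≥ f(S' ∪ {v}) − f(S') whenever S ⊆ S' and v ∉ S'). Let S : ℕ → Finset α be a greedy sequence: S 0 = ∅ and for each t < T there exists v_t ∉ S t such that S (t+1) = S t ∪ {v_t} and f(S t ∪ {v_t}) ≥ f(S t ∪ {u}) for every u ∈ α. Then for every A ⊆ α with card A = T, f(S T) ≥ (1 − 1/e) · f(A), where e = exp 1. -/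
open Finset

private lemma sum_marginal_aux {α : Type*} [DecidableEq α]
    (f : Finset α → ℝ)
    (hmono : ∀ S S' : Finset α, S ⊆ S' → f S ≤ f S')
    (hsubmod : ∀ S S' : Finset α, S ⊆ S' → ∀ v ∉ S',
      f (insert v S') - f S' ≤ f (insert v S) - f S)
    (W : Finset α) (B : Finset α) :
    f (W ∪ B) ≤ f W + ∑ v ∈ B, (f (insert v W) - f W) := by
  classical
  induction B using Finset.induction_on with
  | empty => simp
  | @insert v B hv ih =>
    rw [Finset.sum_insert hv, Finset.union_insert]
    by_cases hvb : v ∈ W ∪ B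
    · rw [Finset.insert_eq_self.mpr hvb]
      have h0 : f W ≤ f (insert v W) := hmono _ _ (Finset.subset_insert _ _)
      linarith
    · have h1 : f (insert v (W ∪ B)) - f (W ∪ B) ≤ f (insert v W) - f W :=
        hsubmod W (W ∪ B) Finset.subset_union_left v hvb
      linarith

theorem greedy_submodular_guarantee {α : Type*} [Fintype α] [DecidableEq α]
    (T : ℕ) (hT : T ≤ Fintype.card α)
    (f : Finset α → ℝ)
    (hempty : f ∅ = 0)
    (hmono : ∀ S S' : Finset α, S ⊆ S' → f S ≤ f S')
    (hsubmod : ∀ S S' : Finset α, S ⊆ S' → ∀ v ∉ S',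
      f (insert v S') - f S' ≤ f (insert v S) - f S)
    (S : ℕ → Finset α)
    (hS0 : S 0 = ∅)
    (hgreedy : ∀ t < T, ∃ v ∉ S t, S (t + 1) = insert v (S t) ∧
      ∀ u : α, f (insert u (S t)) ≤ f (insert v (S t))) :
    ∀ A : Finset α, A.card = T → (1 - 1 / Real.exp 1) * f A ≤ f (S T) := by
  intro A hA
  rcases Nat.eq_zero_or_pos T with hT0 | hTpos
  · subst hT0
    have : A = ∅ := Finset.card_eq_zero.mp hA
    rw [this, hS0, hempty]
    simp
  -- nonnegativity of f A
  have hfA0 : 0 ≤ f A := by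
    have := hmono ∅ A (Finset.empty_subset A)
    linarith
  have hTpos' : (0:ℝ) < T := by exact_mod_cast hTpos
  set c : ℝ := 1 - 1 / T with hc
  have hc0 : 0 ≤ c := by
    rw [hc]
    have : 1 / (T:ℝ) ≤ 1 := by
      rw [div_le_one hTpos']
      exact_mod_cast hTpos
    linarith
  -- key step: for t < T, f A - f (S (t+1)) ≤ c * (f A - f (S t))
  have key : ∀ t < T, f A - f (S (t+1)) ≤ c * (f A - f (S t)) := by
    intro t ht
    obtain ⟨v, hv, hS1, hbest⟩ := hgreedy t ht
    set δ : ℝ := f (S (t+1)) - f (S t) with hδ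
    have h1 : f A ≤ f (S t) + ∑ u ∈ A, (f (insert u (S t)) - f (S t)) := by
      calc f A ≤ f (S t ∪ A) := hmono _ _ Finset.subset_union_right
        _ ≤ _ := sum_marginal_aux f hmono hsubmod (S t) A
    have h2 : ∑ u ∈ A, (f (insert u (S t)) - f (S t)) ≤ (T:ℝ) * δ := by
      calc ∑ u ∈ A, (f (insert u (S t)) - f (S t))
          ≤ ∑ _u ∈ A, δ := by
            apply Finset.sum_le_sum
            intro u _
            have := hbest u
            rw [hδ, hS1]
            linarith
        _ = (T:ℝ) * δ := by rw [Finset.sum_const, hA]; simp [mul_comm]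
    have h3 : f A - f (S t) ≤ (T:ℝ) * δ := by linarith
    have h4 : (f A - f (S t)) / T ≤ δ := by
      rw [div_le_iff₀ hTpos']
      linarith [h3]
    have : f A - f (S (t+1)) = f A - f (S t) - δ := by rw [hδ]; ring
    rw [this, hc]
    have hdiv : (1 - 1/(T:ℝ)) * (f A - f (S t)) = (f A - f (S t)) - (f A - f (S t)) / T := by
      field_simp
    rw [hdiv]
    linarith
  -- induction: f A - f (S t) ≤ c^t * f A
  have main : ∀ t ≤ T, f A - f (S t) ≤ c ^ t * f A := by
    intro t
    induction t with
    | zero => intro _; rw [hS0, hempty]; simp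
    | succ n ih =>
      intro hn
      have hnT : n < T := Nat.lt_of_succ_le hn
      have h1 := key n hnT
      have h2 := ih (Nat.le_of_lt hnT)
      calc f A - f (S (n+1)) ≤ c * (f A - f (S n)) := h1
        _ ≤ c * (c ^ n * f A) := by
          exact mul_le_mul_of_nonneg_left h2 hc0
        _ = c ^ (n+1) * f A := by ring
  have hfinal := main T le_rfl
  -- c^T ≤ exp (-1)
  have hcexp : c ≤ Real.exp (-(1/T)) := by
    have := Real.add_one_le_exp (-(1/(T:ℝ)))
    rw [hc]; linarith
  have hpow : c ^ T ≤ Real.exp (-1) := by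
    calc c ^ T ≤ (Real.exp (-(1/T))) ^ T := pow_le_pow_left₀ hc0 hcexp T
      _ = Real.exp (-(1/T) * T) := by rw [← Real.exp_nat_mul]; ring_nf
      _ = Real.exp (-1) := by
          congr 1
          field_simp
  have hmul : c ^ T * f A ≤ Real.exp (-1) * f A :=
    mul_le_mul_of_nonneg_right hpow hfA0
  have hexp : Real.exp (-1) = 1 / Real.exp 1 := by
    rw [Real.exp_neg]; rw [inv_eq_one_div]
  rw [hexp] at hmul
  linarith
end

section
/- (U-update closed form) Let n be a positive natural number and let V be a real c × n matrix satisfying V Vᵀ = n • I_c. Then for every real d × n matrix B, the matrix U* = (1/n) • B Vᵀ minimizes U ↦ ‖B − U V‖_F²: for every real d × c matrix U, ‖B − U* V‖_F² ≤ ‖B − U V‖_F². -/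
open Matrix

/-- Squared Frobenius norm of a real matrix: the sum of squares of its entries. -/
noncomputable def frobSq {m n : Type*} [Fintype m] [Fintype n]
    (A : Matrix m n ℝ) : ℝ :=
  ∑ i, ∑ j, (A i j) ^ 2

lemma frobSq_eq_trace {m n : Type*} [Fintype m] [Fintype n]
    (A : Matrix m n ℝ) : frobSq A = (A * Aᵀ).trace := by
  simp [frobSq, Matrix.trace, Matrix.mul_apply, Matrix.diag, sq]

lemma frobSq_nonneg {m n : Type*} [Fintype m] [Fintype n]
    (A : Matrix m n ℝ) : 0 ≤ frobSq A := by
  apply Finset.sum_nonneg; intro i _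
  apply Finset.sum_nonneg; intro j _
  positivity

theorem U_update_closed_form {d c n : ℕ} (hn : 0 < n)
    (V : Matrix (Fin c) (Fin n) ℝ)
    (hV : V * Vᵀ = (n : ℝ) • (1 : Matrix (Fin c) (Fin c) ℝ))
    (B : Matrix (Fin d) (Fin n) ℝ)
    (Ustar : Matrix (Fin d) (Fin c) ℝ)
    (hU : Ustar = (1 / (n : ℝ)) • (B * Vᵀ)) :
    ∀ U : Matrix (Fin d) (Fin c) ℝ,
      frobSq (B - Ustar * V) ≤ frobSq (B - U * V) := by
  intro U
  set E := B - Ustar * V with hE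
  set D := Ustar - U with hD
  have hn' : (n : ℝ) ≠ 0 := Nat.cast_ne_zero.mpr hn.ne'
  have hEV : E * Vᵀ = 0 := by
    rw [hE, Matrix.sub_mul, Matrix.mul_assoc, hV, hU]
    rw [Matrix.smul_mul, Matrix.mul_smul, Matrix.mul_one, smul_smul]
    rw [one_div_mul_cancel hn', one_smul, sub_self]
  have hkey : B - U * V = E + D * V := by
    rw [hE, hD, Matrix.sub_mul]; abel
  rw [hkey, frobSq_eq_trace, frobSq_eq_trace]
  have expand : (E + D * V) * (E + D * V)ᵀ
      = E * Eᵀ + E * (Vᵀ * Dᵀ) + D * (V * Eᵀ) + D * (V * Vᵀ) * Dᵀ := by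
    rw [Matrix.transpose_add, Matrix.transpose_mul]
    simp only [Matrix.add_mul, Matrix.mul_add, Matrix.mul_assoc]
    abel
  have hVE : D * (V * Eᵀ) = 0 := by
    have := congrArg Matrix.transpose hEV
    rw [Matrix.transpose_mul, Matrix.transpose_transpose, Matrix.transpose_zero] at this
    rw [this, Matrix.mul_zero]
  have hEV' : E * (Vᵀ * Dᵀ) = 0 := by
    rw [← Matrix.mul_assoc, hEV, Matrix.zero_mul]
  rw [expand, hEV', hVE, add_zero, add_zero, Matrix.trace_add]
  have hnonneg : 0 ≤ (D * (V * Vᵀ) * Dᵀ).trace := by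
    rw [hV, Matrix.mul_smul, Matrix.mul_one, Matrix.smul_mul, Matrix.trace_smul,
      ← frobSq_eq_trace]
    exact smul_nonneg (by positivity) (frobSq_nonneg D)
  linarith
end

section
/- (Theorem 3, trace bound) Let n > 0 be a real number, let Λ be a real m × m diagonal matrix with nonnegative diagonal entries (Λ i j = 0 for i ≠ j and Λ i i ≥ 0), and let G be a real m × m matrix with G Gᵀ = n • I_m. Then trace(Λ G) ≤ √n · trace(Λ). -/
open Matrix

theorem trace_bound_of_scaled_orthogonal {m : ℕ}
    (n : ℝ) (hn : 0 < n)
    (Λ : Matrix (Fin m) (Fin m) ℝ)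
    (hdiag : ∀ i j, i ≠ j → Λ i j = 0) (hpos : ∀ i, 0 ≤ Λ i i)
    (G : Matrix (Fin m) (Fin m) ℝ)
    (hG : G * Gᵀ = n • (1 : Matrix (Fin m) (Fin m) ℝ)) :
    Matrix.trace (Λ * G) ≤ Real.sqrt n * Matrix.trace Λ := by
  have hGbound : ∀ i : Fin m, G i i ≤ Real.sqrt n := by
    intro i
    have hrow : ∑ j, G i j * G i j = n := by
      have := congrFun (congrFun hG i) i
      simpa [Matrix.mul_apply, Matrix.transpose_apply, Matrix.one_apply] using this
    have h1 : (G i i)^2 ≤ n := by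
      rw [← hrow, sq]
      exact Finset.single_le_sum (f := fun j => G i j * G i j)
        (fun j _ => mul_self_nonneg _) (Finset.mem_univ i)
    calc G i i ≤ |G i i| := le_abs_self _
      _ = Real.sqrt ((G i i)^2) := (Real.sqrt_sq_eq_abs _).symm
      _ ≤ Real.sqrt n := Real.sqrt_le_sqrt h1
  have htr : Matrix.trace (Λ * G) = ∑ i, Λ i i * G i i := by
    unfold Matrix.trace
    simp only [Matrix.diag, Matrix.mul_apply]
    apply Finset.sum_congr rfl
    intro i _
    rw [Finset.sum_eq_single i]
    · intro j _ hj; rw [hdiag i j (Ne.symm hj), zero_mul]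
    · intro h; exact absurd (Finset.mem_univ i) h
  rw [htr, Matrix.trace, Finset.mul_sum]
  apply Finset.sum_le_sum
  intro i _
  calc Λ i i * G i i ≤ Λ i i * Real.sqrt n :=
        mul_le_mul_of_nonneg_left (hGbound i) (hpos i)
    _ = Real.sqrt n * Λ i i := mul_comm _ _
end

section
/- (Theorem 3, uniqueness of the maximizer) Let n > 0 be a real number, let Λ be a real m × m diagonal matrix with strictly positive diagonal entries (Λ i j = 0 for i ≠ j and Λ i i > 0), and let G be a real m × m matrix with G Gᵀ = n • I_m. If trace(Λ G) = √n · trace(Λ), then G = √n • I_m (i.e., G i i = √n for all i and G i j = 0 for all i ≠ j). -/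
open Matrix

theorem trace_maximizer_unique {m : ℕ}
    (n : ℝ) (hn : 0 < n)
    (Λ : Matrix (Fin m) (Fin m) ℝ)
    (hdiag : ∀ i j, i ≠ j → Λ i j = 0) (hpos : ∀ i, 0 < Λ i i)
    (G : Matrix (Fin m) (Fin m) ℝ)
    (hG : G * Gᵀ = n • (1 : Matrix (Fin m) (Fin m) ℝ))
    (hmax : Matrix.trace (Λ * G) = Real.sqrt n * Matrix.trace Λ) :
    G = Real.sqrt n • (1 : Matrix (Fin m) (Fin m) ℝ) := by
  have hsq : Real.sqrt n ^ 2 = n := Real.sq_sqrt hn.le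
  have hrow : ∀ i : Fin m, ∑ k, G i k ^ 2 = n := by
    intro i
    have h := congrFun (congrFun hG i) i
    simpa [Matrix.mul_apply, Matrix.transpose_apply, Matrix.one_apply, pow_two] using h
  have hle : ∀ i : Fin m, G i i ≤ Real.sqrt n := by
    intro i
    have h1 : G i i ^ 2 ≤ n := by
      rw [← hrow i]
      exact Finset.single_le_sum (f := fun k => G i k ^ 2) (fun k _ => sq_nonneg _) (Finset.mem_univ i)
    calc G i i ≤ |G i i| := le_abs_self _
      _ = Real.sqrt (G i i ^ 2) := (Real.sqrt_sq_eq_abs _).symm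
      _ ≤ Real.sqrt n := Real.sqrt_le_sqrt h1
  have htr : ∑ i, Λ i i * G i i = ∑ i, Λ i i * Real.sqrt n := by
    have h1 : Matrix.trace (Λ * G) = ∑ i, Λ i i * G i i := by
      rw [Matrix.trace]
      refine Finset.sum_congr rfl fun i _ => ?_
      rw [Matrix.diag_apply, Matrix.mul_apply, Finset.sum_eq_single i]
      · intro k _ hk
        rw [hdiag i k (Ne.symm hk), zero_mul]
      · intro h; exact absurd (Finset.mem_univ i) h
    rw [h1] at hmax
    rw [hmax, Matrix.trace, Finset.mul_sum]
    exact Finset.sum_congr rfl fun i _ => mul_comm _ _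
  have hdg : ∀ i : Fin m, G i i = Real.sqrt n := by
    have := (Finset.sum_eq_sum_iff_of_le
      (fun i _ => mul_le_mul_of_nonneg_left (hle i) (hpos i).le)).mp htr
    intro i
    exact mul_left_cancel₀ (hpos i).ne' (this i (Finset.mem_univ i))
  have hoff : ∀ i j : Fin m, i ≠ j → G i j = 0 := by
    intro i j hij
    have hsum : ∑ k ∈ Finset.univ \ {i}, G i k ^ 2 = 0 := by
      have h2 : ∑ k ∈ Finset.univ \ {i}, G i k ^ 2
          = (∑ k, G i k ^ 2) - G i i ^ 2 := by
        rw [Finset.sum_sdiff_eq_sub (Finset.subset_univ _), Finset.sum_singleton]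
      rw [h2, hrow i, hdg i, hsq, sub_self]
    have := (Finset.sum_eq_zero_iff_of_nonneg (fun k _ => sq_nonneg (G i k))).mp hsum
    have hj : j ∈ Finset.univ \ ({i} : Finset (Fin m)) := by
      simp [Ne.symm hij]
    exact pow_eq_zero_iff (two_ne_zero) |>.mp (this j hj)
  ext i j
  by_cases h : i = j
  · subst h; simp [hdg i]
  · simp [Matrix.one_apply, h, hoff i j h]
end

section
/- (SVD-based trace bound for the Θ-subproblem) Let n be a positive natural number. Let P be a real c × c orthogonal matrix (Pᵀ P = I_c), let Q be a real n × c matrix with orthonormal columns (Qᵀ Q = I_c), let Λ be a real c × c diagonal matrix with nonnegative diagonal entries, and set C = P Λ Qᵀ (a c × n matrix). Then for every real c × n matrix Θ with Θ Θᵀ = n • I_c, trace(Θᵀ C) ≤ √n · trace(Λ). -/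
open Matrix

theorem svd_trace_bound {c n : ℕ} (hn : 0 < n)
    (P : Matrix (Fin c) (Fin c) ℝ) (hP : Pᵀ * P = (1 : Matrix (Fin c) (Fin c) ℝ))
    (Q : Matrix (Fin n) (Fin c) ℝ) (hQ : Qᵀ * Q = (1 : Matrix (Fin c) (Fin c) ℝ))
    (Λ : Matrix (Fin c) (Fin c) ℝ)
    (hdiag : ∀ i j, i ≠ j → Λ i j = 0) (hpos : ∀ i, 0 ≤ Λ i i)
    (C : Matrix (Fin c) (Fin n) ℝ) (hC : C = P * Λ * Qᵀ) :
    ∀ Θ : Matrix (Fin c) (Fin n) ℝ,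
      Θ * Θᵀ = (n : ℝ) • (1 : Matrix (Fin c) (Fin c) ℝ) →
      Matrix.trace (Θᵀ * C) ≤ Real.sqrt n * Matrix.trace Λ := by
  intro Θ hΘ
  set M := Qᵀ * (Θᵀ * P) with hM
  have hMdiag : ∀ i, M i i ≤ Real.sqrt n := by
    intro i
    have hQi : ∑ k, (Q k i) ^ 2 = 1 := by
      have := congrFun (congrFun hQ i) i
      simpa [Matrix.mul_apply, Matrix.one_apply, sq] using this
    have hTP : ∑ k, ((Θᵀ * P) k i) ^ 2 = (n : ℝ) := by
      have h1 : (Θᵀ * P)ᵀ * (Θᵀ * P) = (n : ℝ) • (1 : Matrix (Fin c) (Fin c) ℝ) := by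
        calc (Θᵀ * P)ᵀ * (Θᵀ * P) = Pᵀ * (Θ * Θᵀ) * P := by
              simp [Matrix.transpose_mul, Matrix.mul_assoc]
        _ = (n : ℝ) • (1 : Matrix (Fin c) (Fin c) ℝ) := by
              rw [hΘ, Matrix.mul_smul, Matrix.mul_one, Matrix.smul_mul, hP]
      have := congrFun (congrFun h1 i) i
      simpa [Matrix.mul_apply, Matrix.one_apply, sq, mul_comm] using this
    have hMi : M i i = ∑ k, Q k i * (Θᵀ * P) k i := by
      simp [hM, Matrix.mul_apply, Matrix.transpose_apply]
    have hcs := Real.sum_mul_le_sqrt_mul_sqrt Finset.univ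
      (fun k => Q k i) (fun k => (Θᵀ * P) k i)
    rw [hMi]
    calc ∑ k, Q k i * (Θᵀ * P) k i
        ≤ Real.sqrt (∑ k, (Q k i) ^ 2) * Real.sqrt (∑ k, ((Θᵀ * P) k i) ^ 2) := hcs
      _ = Real.sqrt n := by rw [hQi, hTP, Real.sqrt_one, one_mul]
  have htr : Matrix.trace (Θᵀ * C) = ∑ i, M i i * Λ i i := by
    rw [hC]
    have : Θᵀ * (P * Λ * Qᵀ) = (Θᵀ * P * Λ) * Qᵀ := by
      simp [Matrix.mul_assoc]
    rw [this, Matrix.trace_mul_comm, hM]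
    rw [show Qᵀ * (Θᵀ * P * Λ) = M * Λ by simp [hM, Matrix.mul_assoc]]
    rw [Matrix.trace]
    refine Finset.sum_congr rfl fun i _ => ?_
    rw [Matrix.diag_apply, Matrix.mul_apply]
    rw [Finset.sum_eq_single i]
    · intro j _ hj
      rw [hdiag j i hj, mul_zero]
    · intro h; exact absurd (Finset.mem_univ i) h
  rw [htr]
  calc ∑ i, M i i * Λ i i ≤ ∑ i, Real.sqrt n * Λ i i := by
        refine Finset.sum_le_sum fun i _ => ?_
        exact mul_le_mul_of_nonneg_right (hMdiag i) (hpos i)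
    _ = Real.sqrt n * Matrix.trace Λ := by
        rw [Matrix.trace, ← Finset.mul_sum]; rfl
end

section
/- (SVD-based maximizer of the Θ-subproblem) Let n be a positive natural number. Let P be a real c × c orthogonal matrix (Pᵀ P = I_c and P Pᵀ = I_c), let Q be a real n × c matrix with orthonormal columns (Qᵀ Q = I_c), let Λ be a real c × c diagonal matrix with nonnegative diagonal entries, and set C = P Λ Qᵀ. Then Θ* = √n • P Qᵀ satisfies the constraint Θ* Θ*ᵀ = n • I_c and achieves trace(Θ*ᵀ C) = √n · trace(Λ); hence Θ* maximizes trace(Θᵀ C) over all real c × n matrices Θ with Θ Θᵀ = n • I_c. -/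
open Matrix

theorem svd_trace_maximizer {c n : ℕ} (hn : 0 < n)
    (P : Matrix (Fin c) (Fin c) ℝ)
    (hP : Pᵀ * P = (1 : Matrix (Fin c) (Fin c) ℝ))
    (hP' : P * Pᵀ = (1 : Matrix (Fin c) (Fin c) ℝ))
    (Q : Matrix (Fin n) (Fin c) ℝ) (hQ : Qᵀ * Q = (1 : Matrix (Fin c) (Fin c) ℝ))
    (Λ : Matrix (Fin c) (Fin c) ℝ)
    (hdiag : ∀ i j, i ≠ j → Λ i j = 0) (hpos : ∀ i, 0 ≤ Λ i i)
    (C : Matrix (Fin c) (Fin n) ℝ) (hC : C = P * Λ * Qᵀ)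
    (Θstar : Matrix (Fin c) (Fin n) ℝ)
    (hΘstar : Θstar = Real.sqrt n • (P * Qᵀ)) :
    Θstar * Θstarᵀ = (n : ℝ) • (1 : Matrix (Fin c) (Fin c) ℝ)
      ∧ Matrix.trace (Θstarᵀ * C) = Real.sqrt n * Matrix.trace Λ
      ∧ ∀ Θ : Matrix (Fin c) (Fin n) ℝ,
          Θ * Θᵀ = (n : ℝ) • (1 : Matrix (Fin c) (Fin c) ℝ) →
          Matrix.trace (Θᵀ * C) ≤ Matrix.trace (Θstarᵀ * C) := by
  subst hC hΘstar
  have hsq : Real.sqrt n * Real.sqrt n = (n : ℝ) :=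
    Real.mul_self_sqrt (Nat.cast_nonneg n)
  have h1 : (Real.sqrt n • (P * Qᵀ)) * (Real.sqrt n • (P * Qᵀ))ᵀ
      = (n : ℝ) • (1 : Matrix (Fin c) (Fin c) ℝ) := by
    rw [Matrix.transpose_smul, Matrix.transpose_mul, Matrix.transpose_transpose,
      Matrix.smul_mul, Matrix.mul_smul, smul_smul, hsq]
    have : P * Qᵀ * (Q * Pᵀ) = 1 := by
      rw [Matrix.mul_assoc, ← Matrix.mul_assoc Qᵀ, hQ, Matrix.one_mul, hP']
    rw [this]
  have h2 : Matrix.trace ((Real.sqrt n • (P * Qᵀ))ᵀ * (P * Λ * Qᵀ))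
      = Real.sqrt n * Matrix.trace Λ := by
    rw [Matrix.transpose_smul, Matrix.transpose_mul, Matrix.transpose_transpose,
      Matrix.smul_mul, Matrix.trace_smul]
    congr 1
    have : Q * Pᵀ * (P * Λ * Qᵀ) = Q * Λ * Qᵀ := by
      rw [Matrix.mul_assoc Q Pᵀ, ← Matrix.mul_assoc Pᵀ, ← Matrix.mul_assoc Pᵀ, hP,
        Matrix.one_mul, Matrix.mul_assoc]
    rw [this, Matrix.trace_mul_cycle, hQ, Matrix.one_mul]
  refine ⟨h1, h2, ?_⟩
  intro Θ hΘ
  rw [h2]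
  -- rewrite trace as a sum over the diagonal
  have htr : Matrix.trace (Θᵀ * (P * Λ * Qᵀ))
      = ∑ i : Fin c, (Qᵀ * Θᵀ * P) i i * Λ i i := by
    have : Θᵀ * (P * Λ * Qᵀ) = Θᵀ * P * Λ * Qᵀ := by
      simp [Matrix.mul_assoc]
    rw [this, Matrix.trace_mul_cycle, ← Matrix.mul_assoc, Matrix.trace]
    refine Finset.sum_congr rfl fun i _ => ?_
    rw [Matrix.diag, Matrix.mul_apply]
    rw [Finset.sum_eq_single i]
    · intro k _ hk
      rw [hdiag k i hk, mul_zero]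
    · intro h; exact absurd (Finset.mem_univ i) h
  rw [htr]
  have hA : ∀ i : Fin c, ∑ k : Fin n, ((Pᵀ * Θ) i k) ^ 2 = (n : ℝ) := by
    intro i
    have : (Pᵀ * Θ) * (Pᵀ * Θ)ᵀ = (n : ℝ) • (1 : Matrix (Fin c) (Fin c) ℝ) := by
      rw [Matrix.transpose_mul, Matrix.transpose_transpose]
      calc Pᵀ * Θ * (Θᵀ * P) = Pᵀ * (Θ * Θᵀ) * P := by
            simp [Matrix.mul_assoc]
        _ = (n : ℝ) • (1 : Matrix (Fin c) (Fin c) ℝ) := by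
            rw [hΘ, Matrix.mul_smul, Matrix.mul_one, Matrix.smul_mul, hP]
    have h := congrArg (fun M => M i i) this
    simp only [Matrix.mul_apply, Matrix.transpose_apply, Matrix.smul_apply,
      Matrix.one_apply_eq, smul_eq_mul, mul_one] at h
    simpa [sq, Matrix.mul_apply] using h
  have hQcol : ∀ i : Fin c, ∑ k : Fin n, (Q k i) ^ 2 = (1 : ℝ) := by
    intro i
    have h := congrArg (fun M => M i i) hQ
    simp only [Matrix.mul_apply, Matrix.transpose_apply, Matrix.one_apply_eq] at h
    simpa [sq] using h
  have hbound : ∀ i : Fin c, (Qᵀ * Θᵀ * P) i i ≤ Real.sqrt n := by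
    intro i
    have heq : (Qᵀ * Θᵀ * P) i i = ∑ k : Fin n, Q k i * (Pᵀ * Θ) i k := by
      simp only [Matrix.mul_assoc, Matrix.mul_apply, Matrix.transpose_apply,
        Finset.mul_sum, Finset.sum_mul]
      rw [Finset.sum_comm]
      exact Finset.sum_congr rfl fun k _ => Finset.sum_congr rfl fun j _ => by ring
    rw [heq]
    calc ∑ k : Fin n, Q k i * (Pᵀ * Θ) i k
        ≤ Real.sqrt (∑ k : Fin n, (Q k i) ^ 2) *
          Real.sqrt (∑ k : Fin n, ((Pᵀ * Θ) i k) ^ 2) :=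
          Real.sum_mul_le_sqrt_mul_sqrt _ _ _
      _ = Real.sqrt n := by rw [hQcol i, hA i]; simp
  calc ∑ i : Fin c, (Qᵀ * Θᵀ * P) i i * Λ i i
      ≤ ∑ i : Fin c, Real.sqrt n * Λ i i :=
        Finset.sum_le_sum fun i _ => mul_le_mul_of_nonneg_right (hbound i) (hpos i)
    _ = Real.sqrt n * Matrix.trace Λ := by rw [Matrix.trace, Finset.mul_sum]; rfl
end
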